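/- Let c₁, c₂, c₃, c₄ ∈ ℝ³ be points with pairwise distances 2 and with centroid at the origin (centers of four pairwise tangent unit spheres). Set s = 3 − 2√2 and pᵢ = −s·cᵢ for i = 1,…,4. Then dist(pᵢ, pⱼ) = 2s for all i ≠ j, and dist(pᵢ, cⱼ) = 1 + s for all i ≠ j. Hence the tetrahedral hole between four pairwise tangent unit spheres can be filled by four pairwise tangent spheres of radius 3 − 2√2, each tangent to three of the four unit spheres. -/

import Mathlib

open Real Finset

/-- Let `c₁, c₂, c₃, c₄ ∈ ℝ³` have pairwise distances 2 and centroid at the origin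
(centers of four pairwise tangent unit spheres). With `s = 3 − 2√2` and `pᵢ = −s·cᵢ`,
the points `pᵢ` have pairwise distances `2s` and `dist(pᵢ, cⱼ) = 1 + s` for `i ≠ j`:
the tetrahedral hole between four pairwise tangent unit spheres can be filled by four
pairwise tangent spheres of radius `3 − 2√2`, each tangent to three of the four
unit spheres. -/
theorem tetrahedral_hole_four_small_spheres (c : Fin 4 → EuclideanSpace ℝ (Fin 3))
    (hc : ∀ i j, i ≠ j → dist (c i) (c j) = 2)
    (hcentroid : ∑ i, c i = 0) :
    let s : ℝ := 3 - 2 * Real.sqrt 2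
    let p : Fin 4 → EuclideanSpace ℝ (Fin 3) := fun i => (-s) • c i
    (∀ i j, i ≠ j → dist (p i) (p j) = 2 * s) ∧
    (∀ i j, i ≠ j → dist (p i) (c j) = 1 + s) := by
  intro s p
  have hs2 : Real.sqrt 2 ^ 2 = 2 := Real.sq_sqrt (by norm_num)
  have hs2n : (0:ℝ) ≤ Real.sqrt 2 := Real.sqrt_nonneg 2
  have hslt : Real.sqrt 2 < 3/2 := by nlinarith
  have hs0 : (0:ℝ) ≤ s := by simp only [s]; nlinarith
  have hinner : ∀ i j, i ≠ j →
      (inner ℝ (c i) (c j) : ℝ) = (‖c i‖^2 + ‖c j‖^2 - 4)/2 := by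
    intro i j hij
    have h := hc i j hij
    rw [dist_eq_norm] at h
    have h2 : ‖c i - c j‖^2 = 4 := by rw [h]; norm_num
    rw [norm_sub_sq_real] at h2
    linarith
  have hz : ∀ i, (inner ℝ (c i) (c 0) : ℝ) + inner ℝ (c i) (c 1)
      + inner ℝ (c i) (c 2) + inner ℝ (c i) (c 3) = 0 := by
    intro i
    have h : (inner ℝ (c i) (∑ j, c j) : ℝ) = 0 := by rw [hcentroid, inner_zero_right]
    rw [inner_sum, Fin.sum_univ_four] at h
    linarith
  have hR : ∀ i, ‖c i‖^2 = 3/2 := by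
    have e0 := hz 0; have e1 := hz 1; have e2 := hz 2; have e3 := hz 3
    rw [hinner 0 1 (by decide), hinner 0 2 (by decide), hinner 0 3 (by decide),
      real_inner_self_eq_norm_sq] at e0
    rw [hinner 1 0 (by decide), hinner 1 2 (by decide), hinner 1 3 (by decide),
      real_inner_self_eq_norm_sq] at e1
    rw [hinner 2 0 (by decide), hinner 2 1 (by decide), hinner 2 3 (by decide),
      real_inner_self_eq_norm_sq] at e2
    rw [hinner 3 0 (by decide), hinner 3 1 (by decide), hinner 3 2 (by decide),
      real_inner_self_eq_norm_sq] at e3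
    intro i
    fin_cases i
    · show ‖c 0‖ ^ 2 = 3/2; linarith
    · show ‖c 1‖ ^ 2 = 3/2; linarith
    · show ‖c 2‖ ^ 2 = 3/2; linarith
    · show ‖c 3‖ ^ 2 = 3/2; linarith
  have hI : ∀ i j, i ≠ j → (inner ℝ (c i) (c j) : ℝ) = -1/2 := by
    intro i j hij
    rw [hinner i j hij, hR i, hR j]; norm_num
  constructor
  · intro i j hij
    have : dist (p i) (p j) = ‖(-s : ℝ)‖ * dist (c i) (c j) := dist_smul₀ _ _ _
    rw [this, hc i j hij, Real.norm_eq_abs, abs_neg, abs_of_nonneg hs0]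
    ring
  · intro i j hij
    have h1 : (0:ℝ) ≤ 1 + s := by linarith
    have hd : dist (p i) (c j) ^ 2 = (1 + s)^2 := by
      rw [dist_eq_norm, norm_sub_sq_real, real_inner_smul_left, hI i j hij,
        norm_smul, mul_pow, hR i, hR j, Real.norm_eq_abs, abs_neg, abs_of_nonneg hs0]
      show s^2 * (3/2) - 2 * (-s * (-1/2)) + 3/2 = (1+s)^2
      simp only [s]
      linear_combination (2:ℝ) * hs2
    calc dist (p i) (c j) = Real.sqrt (dist (p i) (c j) ^ 2) :=
          (Real.sqrt_sq dist_nonneg).symm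
      _ = Real.sqrt ((1+s)^2) := by rw [hd]
      _ = 1 + s := Real.sqrt_sq h1
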